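/- arXiv:2510.00951 — 3 statements merged into one kernel-verified Lean document; each statement's English description precedes it below -/
import Mathlib

section
/- Let P be a finite, graded, bounded poset of rank n ≥ 1. Then Ψ_P(a,b) = a(a-b)^{n-1} + ∑_{0̂ < w < 1̂} a(a-b)^{rk(w)-1}·b·Ψ̃_{[w,1̂]}(a,b). -/
open Polynomial

noncomputable section

/-- The coefficient ring `ℤ[y]`. -/
abbrev NCR : Type := Polynomial ℤ

/-- The ring `ℤ[y]⟨a,b⟩` of noncommutative polynomials in the letters `a` (encoded `false`)
and `b` (encoded `true`) with coefficients in `ℤ[y]`. -/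
abbrev NCPoly : Type := MonoidAlgebra NCR (FreeMonoid Bool)

/-- The variable `a`. -/
def Aa : NCPoly := MonoidAlgebra.of NCR (FreeMonoid Bool) (FreeMonoid.of false)

/-- The variable `b`. -/
def Bb : NCPoly := MonoidAlgebra.of NCR (FreeMonoid Bool) (FreeMonoid.of true)

/-- The `ω`-transformation on a single `ab`-monomial (word in `a`,`b`): every occurrence of
the factor `ab` is replaced by `(1+y)ab + (y+y²)ba`, and then all remaining occurrences of `a`
are replaced by `a+yb` and of `b` by `b+ya`. -/
def omegaWord : List Bool → NCPoly
  | [] => 1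
  | false :: true :: rest =>
      (((1 + X : NCR)) • (Aa * Bb) + ((X + X ^ 2 : NCR)) • (Bb * Aa)) * omegaWord rest
  | false :: rest => (Aa + (X : NCR) • Bb) * omegaWord rest
  | true :: rest => (Bb + (X : NCR) • Aa) * omegaWord rest

/-- The `ω`-transformation on `ℤ[y]⟨a,b⟩`, extended linearly from `ab`-monomials. -/
def omega (f : NCPoly) : NCPoly :=
  (f.coeff : FreeMonoid Bool →₀ NCR).sum fun w c => c • omegaWord (FreeMonoid.toList w)

/-- The `ι`-transformation on `ℤ[y]⟨a,b⟩`: it removes the initial letter from every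
`ab`-monomial (and kills the empty monomial). -/
def iota (f : NCPoly) : NCPoly :=
  (f.coeff : FreeMonoid Bool →₀ NCR).sum fun w c =>
    match FreeMonoid.toList w with
    | [] => 0
    | _ :: rest => c • MonoidAlgebra.of NCR (FreeMonoid Bool) (FreeMonoid.ofList rest)

/-- `wt_S(a,b) = w_0 ⋯ w_{n-1}` where `w_k = b` if `k ∈ S` and `w_k = a - b` otherwise. -/
def wtS (n : ℕ) (S : Finset ℕ) : NCPoly :=
  ((List.range n).map fun j => if j ∈ S then Bb else Aa - Bb).prod

/-- Evaluation `f(y,a,b) ↦ f(-x,1,x)` used to define (augmented) Chow polynomials. -/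
def evalChow (f : NCPoly) : Polynomial ℤ :=
  (f.coeff : FreeMonoid Bool →₀ NCR).sum fun w c =>
    c.comp (-X) * X ^ ((FreeMonoid.toList w).count true)

/-- The `ab`-monomial `m_T = m_0 ⋯ m_{n-1}` with `m_i = b` if `i ∈ T` and `m_i = a` else. -/
def mT (n : ℕ) (T : Finset ℕ) : FreeMonoid Bool :=
  FreeMonoid.ofList ((List.range n).map fun i => decide (i ∈ T))

variable {P : Type*} [Fintype P] [PartialOrder P]

open Classical in
/-- The Möbius function of a finite poset:
`μ(w,w) = 1` and `μ(u,w) = -∑_{u ≤ v < w} μ(u,v)` for `u ≠ w`. -/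
def mobius (u : P) : P → ℤ
  | w =>
    if u = w then 1
    else - ∑ v ∈ (Finset.univ.filter fun v : P => u ≤ v ∧ v < w).attach, mobius u v.1
  termination_by w => (Finset.univ.filter fun v : P => u ≤ v ∧ v ≤ w).card
  decreasing_by
    have hv := v.2
    simp only [Finset.mem_filter, Finset.mem_univ, true_and] at hv
    apply Finset.card_lt_card
    constructor
    · intro x hx
      simp only [Finset.mem_filter, Finset.mem_univ, true_and] at hx ⊢
      exact ⟨hx.1, hx.2.trans hv.2.le⟩
    · intro hsub
      have hw : w ∈ Finset.univ.filter fun v : P => u ≤ v ∧ v ≤ w := by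
        simp only [Finset.mem_filter, Finset.mem_univ, true_and]
        exact ⟨hv.1.trans hv.2.le, le_refl w⟩
      have := hsub hw
      simp only [Finset.mem_filter, Finset.mem_univ, true_and] at this
      exact absurd (lt_of_le_of_lt this.2 hv.2) (lt_irrefl w)

open Classical in
/-- The Poincaré polynomial of the interval `[u,w]`, with respect to the rank function `rk`:
`Poin_{[u,w]}(y) = ∑_{u ≤ v ≤ w} μ(u,v)·(-y)^{rk(v) - rk(u)}`. -/
def poin (rk : P → ℕ) (u w : P) : Polynomial ℤ :=
  ∑ v ∈ Finset.univ.filter fun v : P => u ≤ v ∧ v ≤ w,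
    mobius u v • (-X : Polynomial ℤ) ^ (rk v - rk u)

variable [BoundedOrder P]

open Classical in
/-- The extended `ab`-index of the interval `[u₀, ⊤]` of `P` (with ranks taken relative
to `u₀`): the sum over all chains `u₀ ≤ C_1 < ⋯ < C_k < C_{k+1} = ⊤` of
`Poin_{P,C}(y)·wt_C(a,b)`. -/
def exPsiFrom (rk : P → ℕ) (u₀ : P) : NCPoly :=
  ∑ k ∈ Finset.range (Fintype.card P),
    ∑ c ∈ Finset.univ.filter fun c : Fin (k + 1) → P =>
        StrictMono c ∧ c (Fin.last k) = (⊤ : P) ∧ u₀ ≤ c 0,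
      (∏ i : Fin k, poin rk (c i.castSucc) (c i.succ)) •
        wtS (rk (⊤ : P) - rk u₀) (Finset.univ.image fun i : Fin k => rk (c i.castSucc) - rk u₀)

open Classical in
/-- The `ab`-index of the interval `[u₀, ⊤]` of `P`: the sum over all chains
`u₀ ≤ C_1 < ⋯ < C_k < C_{k+1} = ⊤` of `wt_C(a,b)`. -/
def psiFrom (rk : P → ℕ) (u₀ : P) : NCPoly :=
  ∑ k ∈ Finset.range (Fintype.card P),
    ∑ c ∈ Finset.univ.filter fun c : Fin (k + 1) → P =>
        StrictMono c ∧ c (Fin.last k) = (⊤ : P) ∧ u₀ ≤ c 0,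
      wtS (rk (⊤ : P) - rk u₀) (Finset.univ.image fun i : Fin k => rk (c i.castSucc) - rk u₀)

/-- `exΨ̃ = ι(exΨ)` for the interval `[u₀, ⊤]`. -/
def exPsiTildeFrom (rk : P → ℕ) (u₀ : P) : NCPoly := iota (exPsiFrom rk u₀)

/-- `Ψ̃ = ι(Ψ)` for the interval `[u₀, ⊤]`. -/
def psiTildeFrom (rk : P → ℕ) (u₀ : P) : NCPoly := iota (psiFrom rk u₀)

open Classical in
/-- The flag `f`-vector `α(S)`: the number of maximal chains of the rank-selected subposet,
i.e. of chains `C_1 < ⋯ < C_k < C_{k+1} = ⊤` with `{rk(C_1), …, rk(C_k)} = S`. -/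
def flagAlpha (rk : P → ℕ) (S : Finset ℕ) : ℕ :=
  ∑ k ∈ Finset.range (Fintype.card P),
    (Finset.univ.filter fun c : Fin (k + 1) → P =>
      StrictMono c ∧ c (Fin.last k) = (⊤ : P) ∧
        (Finset.univ.image fun i : Fin k => rk (c i.castSucc)) = S).card

/-- The flag `h`-vector `β(T) = ∑_{S ⊆ T} (-1)^{|T∖S|} α(S)`. -/
def flagBeta (rk : P → ℕ) (T : Finset ℕ) : ℤ :=
  ∑ S ∈ T.powerset, (-1 : ℤ) ^ (T \ S).card * (flagAlpha rk S : ℤ)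

/-- An `R`-labeling of the graded poset `P`: every nontrivial interval `[u,w]` has a unique
maximal (i.e. saturated) chain with weakly increasing labels. -/
def IsRLabeling (rk : P → ℕ) (lab : P → P → ℤ) : Prop :=
  ∀ u w : P, u < w →
    ∃! c : Fin (rk w - rk u + 1) → P,
      c 0 = u ∧ c (Fin.last (rk w - rk u)) = w ∧
        (∀ i : Fin (rk w - rk u), c i.castSucc ⋖ c i.succ) ∧
        ∀ i j : Fin (rk w - rk u), i ≤ j →
          lab (c i.castSucc) (c i.succ) ≤ lab (c j.castSucc) (c j.succ)

/-- The label sequence `(λ_0, …, λ_n)` of a maximal chain `c` with sign-set `E`: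
`λ_0 = 0` and `λ_i = ±λ(c_{i-1}, c_i)`, negative exactly when `i ∈ E`. -/
def lamSeq {n : ℕ} (lab : P → P → ℤ) (c : Fin (n + 1) → P) (E : Finset ℕ) :
    Fin (n + 1) → ℤ :=
  fun j =>
    if j = 0 then 0
    else (if (j : ℕ) ∈ E then -1 else 1) * lab (c ⟨j.1 - 1, by omega⟩) (c j)

/-- The `ab`-monomial `m(M,E) = m_0 ⋯ m_{n-1}` with `m_i = b` if `λ_i > λ_{i+1}`
and `m_i = a` if `λ_i ≤ λ_{i+1}`. -/
def rlabWord {n : ℕ} (lab : P → P → ℤ) (c : Fin (n + 1) → P) (E : Finset ℕ) :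
    FreeMonoid Bool :=
  FreeMonoid.ofList
    (List.ofFn fun i : Fin n => decide (lamSeq lab c E i.succ < lamSeq lab c E i.castSucc))

end
noncomputable section
open Classical

/-- Shift a finset of naturals down by `p`, dropping elements `< p`. -/
def shiftBy (p : ℕ) (S : Finset ℕ) : Finset ℕ := (S.filter (p ≤ ·)).image (· - p)

lemma mem_shiftBy {p j : ℕ} {S : Finset ℕ} : j ∈ shiftBy p S ↔ p + j ∈ S := by
  simp only [shiftBy, Finset.mem_image, Finset.mem_filter]
  constructor
  · rintro ⟨s, ⟨hs, hps⟩, rfl⟩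
    rwa [Nat.add_sub_cancel' hps]
  · intro h
    exact ⟨p + j, ⟨h, Nat.le_add_right _ _⟩, by omega⟩

lemma wtS_congr {m : ℕ} {S T : Finset ℕ} (h : ∀ j, j < m → (j ∈ S ↔ j ∈ T)) :
    wtS m S = wtS m T := by
  unfold wtS
  congr 1
  refine List.map_congr_left ?_
  intro j hj
  rw [List.mem_range] at hj
  simp [h j hj]

lemma wtS_add (p q : ℕ) (S : Finset ℕ) :
    wtS (p + q) S = wtS p S * wtS q (shiftBy p S) := by
  unfold wtS
  rw [List.range_add, List.map_append, List.prod_append, List.map_map]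
  congr 2
  refine List.map_congr_left ?_
  intro j hj
  simp [mem_shiftBy]

lemma wtS_const {p : ℕ} {S : Finset ℕ} (h : ∀ j, j < p → j ∉ S) :
    wtS p S = (Aa - Bb) ^ p := by
  unfold wtS
  rw [List.prod_eq_pow_card _ (Aa - Bb) ?_, List.length_map, List.length_range]
  intro x hx
  simp only [List.mem_map, List.mem_range] at hx
  obtain ⟨j, hj, rfl⟩ := hx
  simp [h j hj]

lemma wtS_one_mem {S : Finset ℕ} (h : 0 ∈ S) : wtS 1 S = Bb := by
  simp [wtS, List.range_succ, h]
lemma iota_zero : iota 0 = 0 := by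
  simp [iota]

lemma iota_single (w : FreeMonoid Bool) (c : NCR) :
    iota (MonoidAlgebra.single w c) =
      match FreeMonoid.toList w with
      | [] => 0
      | _ :: rest => c • MonoidAlgebra.of NCR (FreeMonoid Bool) (FreeMonoid.ofList rest) := by
  unfold iota
  rw [MonoidAlgebra.coeff_single, Finsupp.sum_single_index]
  match FreeMonoid.toList w with
  | [] => simp
  | _ :: rest => simp

lemma iota_add (f g : NCPoly) : iota (f + g) = iota f + iota g := by
  unfold iota
  rw [MonoidAlgebra.coeff_add, Finsupp.sum_add_index]
  · intro w _
    match FreeMonoid.toList w with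
    | [] => simp
    | _ :: rest => simp
  · intro w _ c d
    match FreeMonoid.toList w with
    | [] => simp
    | _ :: rest => simp [add_smul]

lemma iota_sum {α : Type*} (s : Finset α) (f : α → NCPoly) :
    iota (∑ x ∈ s, f x) = ∑ x ∈ s, iota (f x) := by
  classical
  induction s using Finset.induction_on with
  | empty => simp [iota_zero]
  | insert _ _ h ih => rw [Finset.sum_insert h, iota_add, ih, Finset.sum_insert h]

lemma iota_neg (f : NCPoly) : iota (-f) = - iota f := by
  have := iota_add f (-f)
  simp only [add_neg_cancel, iota_zero] at this
  linear_combination (norm := abel) -this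

lemma iota_sub (f g : NCPoly) : iota (f - g) = iota f - iota g := by
  rw [sub_eq_add_neg, iota_add, iota_neg, sub_eq_add_neg]

lemma iota_Aa_mul (f : NCPoly) : iota (Aa * f) = f := by
  induction f using MonoidAlgebra.induction with
  | zero => simp [iota_zero]
  | single_add w c f _ _ ih =>
    rw [mul_add, iota_add, ih]
    congr 1
    show iota (Aa * MonoidAlgebra.single w c) = MonoidAlgebra.single w c
    rw [show Aa = MonoidAlgebra.single (FreeMonoid.of false) (1 : NCR) from rfl,
      MonoidAlgebra.single_mul_single, one_mul, iota_single]
    simp [FreeMonoid.toList_of, FreeMonoid.toList_mul]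

lemma iota_Bb_mul (f : NCPoly) : iota (Bb * f) = f := by
  induction f using MonoidAlgebra.induction with
  | zero => simp [iota_zero]
  | single_add w c f _ _ ih =>
    rw [mul_add, iota_add, ih]
    congr 1
    show iota (Bb * MonoidAlgebra.single w c) = MonoidAlgebra.single w c
    rw [show Bb = MonoidAlgebra.single (FreeMonoid.of true) (1 : NCR) from rfl,
      MonoidAlgebra.single_mul_single, one_mul, iota_single]
    simp [FreeMonoid.toList_of, FreeMonoid.toList_mul]

lemma iota_sub_mul (f : NCPoly) : iota ((Aa - Bb) * f) = 0 := by
  rw [sub_mul, iota_sub, iota_Aa_mul, iota_Bb_mul, sub_self]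

/-- `iota` of a weight with at least one letter. -/
lemma iota_wtS (m : ℕ) (S : Finset ℕ) :
    iota (wtS (m + 1) S) =
      if 0 ∈ S then wtS m (shiftBy 1 S) else 0 := by
  rw [show m + 1 = 1 + m by omega, wtS_add]
  by_cases h : 0 ∈ S
  · rw [wtS_one_mem h, if_pos h, iota_Bb_mul]
  · rw [show wtS 1 S = Aa - Bb by simp [wtS, List.range_succ, h], if_neg h, iota_sub_mul]

section OrderLemmas
variable {P : Type*} [Fintype P] [PartialOrder P]

lemma exists_le_covby {u v : P} (h : u < v) : ∃ w, u ≤ w ∧ w ⋖ v := by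
  classical
  have hne : (Finset.univ.filter fun w : P => u ≤ w ∧ w < v).Nonempty :=
    ⟨u, by simp [h, le_refl]⟩
  obtain ⟨w, hw, hmax⟩ := Finset.exists_maximal hne
  simp only [Finset.mem_filter, Finset.mem_univ, true_and] at hw
  refine ⟨w, hw.1, hw.2, fun m hm hmv => ?_⟩
  exact (lt_irrefl w) (lt_of_lt_of_le hm (hmax (by simp [le_of_lt, hw.1.trans hm.le, hmv]) hm.le))

lemma rk_lt_of_lt {rk : P → ℕ} (hrk_cov : ∀ u v : P, u ⋖ v → rk v = rk u + 1)
    {u v : P} (h : u < v) : rk u < rk v := by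
  have : ∀ v : P, ∀ u : P, u < v → rk u < rk v := by
    intro v
    induction v using WellFoundedLT.induction with
    | _ v ih =>
      intro u hu
      obtain ⟨w, huw, hwv⟩ := exists_le_covby hu
      have hv := hrk_cov _ _ hwv
      rcases eq_or_lt_of_le huw with rfl | hlt
      · omega
      · have := ih w hwv.1 u hlt
        omega
  exact this v u h

lemma rk_le_of_le {rk : P → ℕ} (hrk_cov : ∀ u v : P, u ⋖ v → rk v = rk u + 1)
    {u v : P} (h : u ≤ v) : rk u ≤ rk v := by
  rcases eq_or_lt_of_le h with rfl | h
  · exact le_refl _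
  · exact (rk_lt_of_lt hrk_cov h).le

end OrderLemmas

section Chains
open Classical
variable {P : Type*} [Fintype P] [PartialOrder P] [BoundedOrder P]

/-- Chains `w = C_0 < C_1 < ⋯ < C_k = ⊤` starting exactly at `w`. -/
def chainsFrom (k : ℕ) (w : P) : Finset (Fin (k + 1) → P) :=
  Finset.univ.filter fun c => StrictMono c ∧ c (Fin.last k) = (⊤ : P) ∧ c 0 = w

/-- The sum of tail weights of chains starting exactly at `w`. -/
def tailSum (rk : P → ℕ) (w : P) : NCPoly :=
  ∑ k ∈ Finset.range (Fintype.card P), ∑ c ∈ chainsFrom k w,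
    wtS (rk (⊤ : P) - rk w - 1)
      (shiftBy 1 (Finset.univ.image fun i : Fin k => rk (c i.castSucc) - rk w))

lemma chainsFrom_facts {k : ℕ} {w : P} {c : Fin (k + 1) → P} (hc : c ∈ chainsFrom k w) :
    StrictMono c ∧ c (Fin.last k) = (⊤ : P) ∧ c 0 = w ∧ ∀ i, w ≤ c i := by
  simp only [chainsFrom, Finset.mem_filter, Finset.mem_univ, true_and] at hc
  exact ⟨hc.1, hc.2.1, hc.2.2, fun i => hc.2.2 ▸ hc.1.monotone (Fin.zero_le i)⟩

lemma chainsFrom_pos {k : ℕ} {w : P} {c : Fin (k + 1) → P} (hc : c ∈ chainsFrom k w)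
    (hw : w ≠ (⊤ : P)) : 0 < k := by
  obtain ⟨h1, h2, h3, _⟩ := chainsFrom_facts hc
  by_contra h
  push_neg at h
  interval_cases k
  exact hw (h3 ▸ h2 ▸ rfl)

lemma weight_split (rk : P → ℕ) (hrk_cov : ∀ u v : P, u ⋖ v → rk v = rk u + 1)
    {n : ℕ} (hrk_top : rk (⊤ : P) = n) {k : ℕ} {w : P} (hw : w < (⊤ : P))
    {c : Fin (k + 1) → P} (hc : c ∈ chainsFrom k w) (t : ℕ) (ht : t ≤ rk w) :
    wtS (n - t) (Finset.univ.image fun i : Fin k => rk (c i.castSucc) - t) =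
      (Aa - Bb) ^ (rk w - t) *
        (Bb * wtS (n - rk w - 1)
          (shiftBy 1 (Finset.univ.image fun i : Fin k => rk (c i.castSucc) - rk w))) := by
  obtain ⟨hsm, hlast, h0, hge⟩ := chainsFrom_facts hc
  have hk : 0 < k := chainsFrom_pos hc hw.ne
  have hwn : rk w < n := hrk_top ▸ rk_lt_of_lt hrk_cov hw
  have hrk_ge : ∀ i : Fin k, rk w ≤ rk (c i.castSucc) :=
    fun i => rk_le_of_le hrk_cov (hge _)
  rw [show n - t = (rk w - t) + (n - rk w) by omega, wtS_add]
  have h1 : wtS (rk w - t) (Finset.univ.image fun i : Fin k => rk (c i.castSucc) - t) =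
      (Aa - Bb) ^ (rk w - t) := by
    apply wtS_const
    intro j hj hjmem
    simp only [Finset.mem_image, Finset.mem_univ, true_and] at hjmem
    obtain ⟨i, hi⟩ := hjmem
    have := hrk_ge i
    omega
  have h2 : wtS (n - rk w)
        (shiftBy (rk w - t) (Finset.univ.image fun i : Fin k => rk (c i.castSucc) - t)) =
      wtS (n - rk w) (Finset.univ.image fun i : Fin k => rk (c i.castSucc) - rk w) := by
    apply wtS_congr
    intro j _
    simp only [mem_shiftBy, Finset.mem_image, Finset.mem_univ, true_and]
    constructor
    · rintro ⟨i, hi⟩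
      exact ⟨i, by have := hrk_ge i; omega⟩
    · rintro ⟨i, hi⟩
      exact ⟨i, by have := hrk_ge i; omega⟩
  rw [h1, h2, show n - rk w = 1 + (n - rk w - 1) by omega, wtS_add, wtS_one_mem]
  · rw [show 1 + (n - rk w - 1) - 1 = n - rk w - 1 from by omega]
  · simp only [Finset.mem_image, Finset.mem_univ, true_and]
    refine ⟨⟨0, hk⟩, ?_⟩
    have : (⟨0, hk⟩ : Fin k).castSucc = 0 := rfl
    rw [this, h0]
    omega

end Chains

section Chains2
open Classical
variable {P : Type*} [Fintype P] [PartialOrder P] [BoundedOrder P]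

lemma psiTilde_eq_tailSum (rk : P → ℕ) (hrk_cov : ∀ u v : P, u ⋖ v → rk v = rk u + 1)
    {w : P} (hw : w < (⊤ : P)) : psiTildeFrom rk w = tailSum rk w := by
  have hwrk : rk w < rk (⊤ : P) := rk_lt_of_lt hrk_cov hw
  unfold psiTildeFrom psiFrom tailSum
  rw [iota_sum]
  refine Finset.sum_congr rfl fun k _ => ?_
  rw [iota_sum]
  have step1 : ∀ c ∈ (Finset.univ.filter fun c : Fin (k + 1) → P =>
      StrictMono c ∧ c (Fin.last k) = (⊤ : P) ∧ w ≤ c 0),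
      iota (wtS (rk (⊤ : P) - rk w)
          (Finset.univ.image fun i : Fin k => rk (c i.castSucc) - rk w)) =
        if c 0 = w then
          wtS (rk (⊤ : P) - rk w - 1)
            (shiftBy 1 (Finset.univ.image fun i : Fin k => rk (c i.castSucc) - rk w))
        else 0 := by
    intro c hc
    simp only [Finset.mem_filter, Finset.mem_univ, true_and] at hc
    obtain ⟨hsm, hlast, hle⟩ := hc
    rw [show rk (⊤ : P) - rk w = (rk (⊤ : P) - rk w - 1) + 1 by omega, iota_wtS]
    simp only [Nat.add_sub_cancel]
    have hiff : (0 ∈ Finset.univ.image fun i : Fin k => rk (c i.castSucc) - rk w) ↔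
        c 0 = w := by
      simp only [Finset.mem_image, Finset.mem_univ, true_and]
      constructor
      · rintro ⟨i, hi⟩
        have h1 : w ≤ c i.castSucc := hle.trans (hsm.monotone (Fin.zero_le _))
        rcases eq_or_lt_of_le h1 with heq | hlt
        · have h2 : c 0 ≤ c i.castSucc := hsm.monotone (Fin.zero_le _)
          exact le_antisymm (heq ▸ h2) hle
        · have := rk_lt_of_lt hrk_cov hlt
          omega
      · intro h0
        have hk : 0 < k := by
          by_contra hk
          push_neg at hk
          interval_cases k
          exact absurd (h0 ▸ hlast ▸ rfl : w = (⊤ : P)) hw.ne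
        refine ⟨⟨0, hk⟩, ?_⟩
        have : (⟨0, hk⟩ : Fin k).castSucc = 0 := rfl
        rw [this, h0]
        omega
    exact if_congr hiff rfl rfl
  rw [Finset.sum_congr rfl step1, ← Finset.sum_filter]
  congr 1
  ext c
  simp only [chainsFrom, Finset.mem_filter, Finset.mem_univ, true_and]
  constructor
  · rintro ⟨⟨h1, h2, _⟩, h4⟩
    exact ⟨h1, h2, h4⟩
  · rintro ⟨h1, h2, h3⟩
    exact ⟨⟨h1, h2, h3.ge⟩, h3⟩

end Chains2

section Chains3
open Classical
variable {P : Type*} [Fintype P] [PartialOrder P] [BoundedOrder P]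

lemma chain_sum_split (rk : P → ℕ) (hrk_cov : ∀ u v : P, u ⋖ v → rk v = rk u + 1)
    {w : P} (hw : w < (⊤ : P)) (t : ℕ) (ht : t ≤ rk w) :
    ∑ k ∈ Finset.range (Fintype.card P), ∑ c ∈ chainsFrom k w,
        wtS (rk (⊤ : P) - t) (Finset.univ.image fun i : Fin k => rk (c i.castSucc) - t) =
      (Aa - Bb) ^ (rk w - t) * (Bb * tailSum rk w) := by
  unfold tailSum
  refine Eq.trans (Finset.sum_congr rfl fun k _ => Finset.sum_congr rfl fun c hc =>
    weight_split rk hrk_cov rfl hw hc t ht) ?_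
  simp only [← Finset.mul_sum]

lemma chainsFrom_top (k : ℕ) :
    chainsFrom k (⊤ : P) = if k = 0 then {fun _ => (⊤ : P)} else ∅ := by
  rcases Nat.eq_zero_or_pos k with rfl | hk
  · rw [if_pos rfl]
    ext c
    simp only [chainsFrom, Finset.mem_filter, Finset.mem_univ, true_and,
      Finset.mem_singleton]
    constructor
    · rintro ⟨_, _, h3⟩
      funext i
      rw [Fin.eq_zero i]
      exact h3
    · rintro rfl
      refine ⟨fun i j hij => ?_, rfl, rfl⟩
      rw [Fin.eq_zero i, Fin.eq_zero j] at hij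
      exact absurd hij (lt_irrefl _)
  · rw [if_neg hk.ne']
    ext c
    simp only [chainsFrom, Finset.mem_filter, Finset.mem_univ, true_and,
      Finset.notMem_empty, iff_false]
    rintro ⟨h1, h2, h3⟩
    have h0last : (0 : Fin (k + 1)) < Fin.last k := by
      rw [Fin.lt_def]
      simpa using hk
    have := h1 h0last
    rw [h2, h3] at this
    exact lt_irrefl _ this

lemma chain_sum_top (rk : P → ℕ) (t : ℕ) :
    ∑ k ∈ Finset.range (Fintype.card P), ∑ c ∈ chainsFrom k (⊤ : P),
        wtS (rk (⊤ : P) - t) (Finset.univ.image fun i : Fin k => rk (c i.castSucc) - t) =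
      (Aa - Bb) ^ (rk (⊤ : P) - t) := by
  have hN : 0 < Fintype.card P := Fintype.card_pos_iff.mpr ⟨⊤⟩
  rw [Finset.sum_eq_single 0]
  · rw [chainsFrom_top, if_pos rfl, Finset.sum_singleton]
    have : (Finset.univ.image fun i : Fin 0 => rk ((fun _ => (⊤ : P)) i.castSucc) - t) =
        (∅ : Finset ℕ) := by simp
    rw [this]
    exact wtS_const fun j _ hj => absurd hj (Finset.notMem_empty j)
  · intro k _ hk
    rw [chainsFrom_top, if_neg hk, Finset.sum_empty]
  · intro h
    exact absurd (Finset.mem_range.mpr hN) h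

end Chains3

section Chains4
open Classical
variable {P : Type*} [Fintype P] [PartialOrder P] [BoundedOrder P]

lemma sum_univ_split (hbt : (⊥ : P) ≠ ⊤) (g : P → NCPoly) :
    ∑ v : P, g v =
      g ⊥ + g ⊤ + ∑ v ∈ Finset.univ.filter fun v : P => ⊥ < v ∧ v < ⊤, g v := by
  have huniv : (Finset.univ : Finset P) =
      insert ⊥ (insert ⊤ (Finset.univ.filter fun v : P => ⊥ < v ∧ v < ⊤)) := by
    ext v
    simp only [Finset.mem_univ, Finset.mem_insert, Finset.mem_filter, true_and, true_iff]
    rcases eq_or_lt_of_le (bot_le : (⊥ : P) ≤ v) with h1 | h1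
    · exact Or.inl h1.symm
    · rcases eq_or_lt_of_le (le_top : v ≤ (⊤ : P)) with h2 | h2
      · exact Or.inr (Or.inl h2)
      · exact Or.inr (Or.inr ⟨h1, h2⟩)
  have hmem1 : (⊤ : P) ∉ Finset.univ.filter fun v : P => ⊥ < v ∧ v < ⊤ := by
    simp only [Finset.mem_filter, Finset.mem_univ, true_and]
    exact fun h => absurd h.2 (lt_irrefl _)
  have hmem2 : (⊥ : P) ∉ insert ⊤ (Finset.univ.filter fun v : P => ⊥ < v ∧ v < ⊤) := by
    simp only [Finset.mem_insert, Finset.mem_filter, Finset.mem_univ, true_and]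
    push_neg
    exact ⟨hbt, fun h => absurd h (lt_irrefl _)⟩
  conv_lhs => rw [huniv]
  rw [Finset.sum_insert hmem2, Finset.sum_insert hmem1, ← add_assoc]

/-- The prepend-`⊥` operation on chains. -/
def prep {P : Type*} [PartialOrder P] [BoundedOrder P] {k : ℕ}
    (c' : Fin (k + 1) → P) : Fin (k + 2) → P :=
  fun i => if h : i.1 = 0 then ⊥ else c' ⟨i.1 - 1, by omega⟩

lemma bot_chain_sum (rk : P → ℕ) (hrk_cov : ∀ u v : P, u ⋖ v → rk v = rk u + 1)
    (hrk_bot : rk (⊥ : P) = 0) (hbt : (⊥ : P) ≠ ⊤) :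
    ∑ k ∈ Finset.range (Fintype.card P), ∑ c ∈ chainsFrom k (⊥ : P),
        wtS (rk (⊤ : P)) (Finset.univ.image fun i : Fin k => rk (c i.castSucc)) =
      Bb * ((Aa - Bb) ^ (rk (⊤ : P) - 1) +
        ∑ v ∈ Finset.univ.filter fun v : P => ⊥ < v ∧ v < ⊤,
          (Aa - Bb) ^ (rk v - 1) * (Bb * tailSum rk v)) := by
  have hbtop : (⊥ : P) < ⊤ := lt_of_le_of_ne bot_le hbt
  have htop1 : 1 ≤ rk (⊤ : P) := by
    have := rk_lt_of_lt hrk_cov hbtop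
    omega
  set N := Fintype.card P with hNdef
  have hN : 1 ≤ N := Fintype.card_pos_iff.mpr ⟨⊤⟩
  set f : ℕ → NCPoly := fun k =>
    ∑ c ∈ chainsFrom k (⊥ : P),
      wtS (rk (⊤ : P)) (Finset.univ.image fun i : Fin k => rk (c i.castSucc)) with hf
  -- Step A: reindex
  have hf0 : f 0 = 0 := by
    refine Finset.sum_eq_zero fun c hc => absurd ?_ hbt
    obtain ⟨_, h2, h3, _⟩ := chainsFrom_facts hc
    rw [← h3, ← h2]
    rfl
  have hfN : f N = 0 := by
    refine Finset.sum_eq_zero fun c hc => ?_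
    obtain ⟨h1, _, _, _⟩ := chainsFrom_facts hc
    have := Fintype.card_le_of_injective c h1.injective
    simp only [Fintype.card_fin] at this
    omega
  have stepA : ∑ k ∈ Finset.range N, f k = ∑ k ∈ Finset.range N, f (k + 1) := by
    obtain ⟨M, hM⟩ : ∃ M, N = M + 1 := ⟨N - 1, by omega⟩
    rw [hM, Finset.sum_range_succ' f, hf0, add_zero, Finset.sum_range_succ (fun k => f (k + 1)),
      ← hM, hfN, add_zero]
  rw [stepA]
  -- Step B: strip the bottom element
  have stepB : ∀ k : ℕ, f (k + 1) =
      Bb * ∑ c' ∈ (Finset.univ.filter fun c' : Fin (k + 1) → P =>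
          StrictMono c' ∧ c' (Fin.last k) = (⊤ : P) ∧ ⊥ < c' 0),
        wtS (rk (⊤ : P) - 1)
          (Finset.univ.image fun i : Fin k => rk (c' i.castSucc) - 1) := by
    intro k
    rw [hf, Finset.mul_sum]
    refine Finset.sum_bij' (fun c _ => c ∘ Fin.succ) (fun c' _ => prep c') ?_ ?_ ?_ ?_ ?_
    · -- maps to
      intro c hc
      obtain ⟨h1, h2, h3, _⟩ := chainsFrom_facts hc
      simp only [Finset.mem_filter, Finset.mem_univ, true_and]
      refine ⟨fun i j hij => h1 (by rwa [Fin.succ_lt_succ_iff]), ?_, ?_⟩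
      · show c (Fin.last k).succ = ⊤
        rw [Fin.succ_last]
        exact h2
      · show ⊥ < c (Fin.succ 0)
        rw [← h3]
        exact h1 (Fin.succ_pos 0)
    · -- maps back
      intro c' hc'
      simp only [Finset.mem_filter, Finset.mem_univ, true_and] at hc'
      obtain ⟨h1, h2, h3⟩ := hc'
      simp only [chainsFrom, Finset.mem_filter, Finset.mem_univ, true_and]
      refine ⟨?_, ?_, ?_⟩
      · intro i j hij
        rw [Fin.lt_def] at hij
        by_cases hi : i.1 = 0
        · have hj : j.1 ≠ 0 := by omega
          show prep c' i < prep c' j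
          simp only [prep]
          rw [dif_pos hi, dif_neg hj]
          exact lt_of_lt_of_le h3 (h1.monotone (Fin.zero_le _))
        · have hj : j.1 ≠ 0 := by omega
          show prep c' i < prep c' j
          simp only [prep]
          rw [dif_neg hi, dif_neg hj]
          exact h1 (by rw [Fin.lt_def]; simp; omega)
      · show prep c' (Fin.last (k + 1)) = ⊤
        simp only [prep]
        have hne : (Fin.last (k + 1)).1 ≠ 0 := by simp
        rw [dif_neg hne, ← h2]
        exact congrArg c' (Fin.ext (by simp))
      · show prep c' 0 = ⊥
        exact dif_pos rfl
    · -- left inverse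
      intro c hc
      obtain ⟨_, _, h3, _⟩ := chainsFrom_facts hc
      funext i
      by_cases hi : i.1 = 0
      · show prep (c ∘ Fin.succ) i = c i
        simp only [prep]
        rw [dif_pos hi, ← h3]
        exact congrArg c (Fin.ext (by simp [hi]))
      · show prep (c ∘ Fin.succ) i = c i
        simp only [prep]
        rw [dif_neg hi]
        show c (Fin.succ ⟨i.1 - 1, _⟩) = c i
        congr 1
        exact Fin.ext (by simp; omega)
    · -- right inverse
      intro c' hc'
      funext i
      have hi : (Fin.succ i).1 ≠ 0 := by simp
      show prep c' (Fin.succ i) = c' i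
      simp only [prep]
      rw [dif_neg hi]
      exact congrArg c' (Fin.ext (by simp))
    · -- weights
      intro c hc
      obtain ⟨h1, h2, h3, _⟩ := chainsFrom_facts hc
      have h0mem : 0 ∈ Finset.univ.image fun i : Fin (k + 1) => rk (c i.castSucc) := by
        simp only [Finset.mem_image, Finset.mem_univ, true_and]
        refine ⟨0, ?_⟩
        have : (0 : Fin (k + 1)).castSucc = 0 := rfl
        rw [this, h3, hrk_bot]
      rw [show rk (⊤ : P) = 1 + (rk (⊤ : P) - 1) by omega, wtS_add, wtS_one_mem h0mem]
      simp only [Nat.add_sub_cancel_left]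
      congr 1
      apply wtS_congr
      intro j _
      simp only [mem_shiftBy, Finset.mem_image, Finset.mem_univ, true_and,
        Function.comp_apply]
      constructor
      · rintro ⟨i, hi⟩
        have hine : i.castSucc.1 ≠ 0 := by
          intro h0
          have : i.castSucc = 0 := Fin.ext h0
          rw [this, h3, hrk_bot] at hi
          omega
        have hlt : i.1 - 1 < k := by
          have := i.2
          have : i.castSucc.1 = i.1 := rfl
          omega
        refine ⟨⟨i.1 - 1, hlt⟩, ?_⟩
        have : (⟨i.1 - 1, hlt⟩ : Fin k).castSucc.succ = i.castSucc := by
          apply Fin.ext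
          have : i.castSucc.1 = i.1 := rfl
          simp
          omega
        rw [this, hi]
        omega
      · rintro ⟨i, hi⟩
        have hpos : (⊥ : P) < c i.castSucc.succ := by
          rw [← h3]
          exact h1 (Fin.succ_pos _)
        have hrk1 : 1 ≤ rk (c i.castSucc.succ) := by
          have := rk_lt_of_lt hrk_cov hpos
          omega
        have hlt2 : i.1 + 1 < k + 1 + 1 := by
          have := i.2
          omega
        refine ⟨⟨i.1 + 1, by omega⟩, ?_⟩
        have : (⟨i.1 + 1, by omega⟩ : Fin (k + 1)).castSucc = i.castSucc.succ := by
          apply Fin.ext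
          simp
        rw [this]
        omega
  rw [Finset.sum_congr rfl fun k _ => stepB k, ← Finset.mul_sum]
  congr 1
  -- Step C: fiber over the starting element
  have fib : ∀ k : ℕ,
      (∑ c' ∈ (Finset.univ.filter fun c' : Fin (k + 1) → P =>
          StrictMono c' ∧ c' (Fin.last k) = (⊤ : P) ∧ ⊥ < c' 0),
        wtS (rk (⊤ : P) - 1)
          (Finset.univ.image fun i : Fin k => rk (c' i.castSucc) - 1)) =
      ∑ v : P, ∑ c' ∈ (Finset.univ.filter fun c' : Fin (k + 1) → P =>
          StrictMono c' ∧ c' (Fin.last k) = (⊤ : P) ∧ ⊥ < c' 0).filter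
            (fun c' => c' 0 = v),
        wtS (rk (⊤ : P) - 1)
          (Finset.univ.image fun i : Fin k => rk (c' i.castSucc) - 1) := by
    intro k
    exact (Finset.sum_fiberwise _ _ _).symm
  rw [Finset.sum_congr rfl fun k _ => fib k, Finset.sum_comm]
  have hfib_eq : ∀ (v : P) (k : ℕ),
      ((Finset.univ.filter fun c' : Fin (k + 1) → P =>
          StrictMono c' ∧ c' (Fin.last k) = (⊤ : P) ∧ ⊥ < c' 0).filter
            (fun c' => c' 0 = v)) =
        if ⊥ < v then chainsFrom k v else ∅ := by
    intro v k
    ext c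
    simp only [Finset.mem_filter, Finset.mem_univ, true_and, chainsFrom]
    by_cases hv : (⊥ : P) < v
    · rw [if_pos hv]
      simp only [Finset.mem_filter, Finset.mem_univ, true_and]
      constructor
      · rintro ⟨⟨a1, a2, _⟩, a4⟩
        exact ⟨a1, a2, a4⟩
      · rintro ⟨a1, a2, a3⟩
        exact ⟨⟨a1, a2, a3 ▸ hv⟩, a3⟩
    · rw [if_neg hv]
      simp only [Finset.notMem_empty, iff_false]
      rintro ⟨⟨_, _, a3⟩, a4⟩
      exact hv (a4 ▸ a3)
  rw [sum_univ_split hbt]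
  have hterm_bot : ∑ k ∈ Finset.range N,
      ∑ c' ∈ ((Finset.univ.filter fun c' : Fin (k + 1) → P =>
          StrictMono c' ∧ c' (Fin.last k) = (⊤ : P) ∧ ⊥ < c' 0).filter
            (fun c' => c' 0 = (⊥ : P))),
        wtS (rk (⊤ : P) - 1)
          (Finset.univ.image fun i : Fin k => rk (c' i.castSucc) - 1) = 0 := by
    refine Finset.sum_eq_zero fun k _ => ?_
    rw [hfib_eq ⊥ k, if_neg (lt_irrefl _), Finset.sum_empty]
  have hterm_top : ∑ k ∈ Finset.range N,
      ∑ c' ∈ ((Finset.univ.filter fun c' : Fin (k + 1) → P =>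
          StrictMono c' ∧ c' (Fin.last k) = (⊤ : P) ∧ ⊥ < c' 0).filter
            (fun c' => c' 0 = (⊤ : P))),
        wtS (rk (⊤ : P) - 1)
          (Finset.univ.image fun i : Fin k => rk (c' i.castSucc) - 1) =
      (Aa - Bb) ^ (rk (⊤ : P) - 1) := by
    rw [Finset.sum_congr rfl fun k _ => by rw [hfib_eq ⊤ k, if_pos hbtop]]
    exact chain_sum_top rk 1
  rw [hterm_bot, hterm_top, zero_add]
  congr 1
  refine Finset.sum_congr rfl fun v hv => ?_
  simp only [Finset.mem_filter, Finset.mem_univ, true_and] at hv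
  have hrkv : 1 ≤ rk v := by
    have := rk_lt_of_lt hrk_cov hv.1
    omega
  rw [Finset.sum_congr rfl fun k _ => by rw [hfib_eq v k, if_pos hv.1]]
  exact chain_sum_split rk hrk_cov hv.2 1 hrkv

end Chains4

end
open Classical in
/-- Recursion for the `ab`-index of a finite, graded, bounded poset of rank
`n ≥ 1`. -/
theorem psi_recursion
    {P : Type*} [Fintype P] [PartialOrder P] [BoundedOrder P]
    (rk : P → ℕ) (n : ℕ) (hn : 1 ≤ n)
    (hrk_bot : rk (⊥ : P) = 0) (hrk_top : rk (⊤ : P) = n)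
    (hrk_cov : ∀ u v : P, u ⋖ v → rk v = rk u + 1) :
    psiFrom rk (⊥ : P) =
      Aa * (Aa - Bb) ^ (n - 1) +
        ∑ w ∈ Finset.univ.filter fun w : P => ⊥ < w ∧ w < ⊤,
          Aa * (Aa - Bb) ^ (rk w - 1) * Bb * psiTildeFrom rk w := by
  subst hrk_top
  have hbt : (⊥ : P) ≠ ⊤ := fun h => by rw [h] at hrk_bot; omega
  have hbtop : (⊥ : P) < ⊤ := lt_of_le_of_ne bot_le hbt
  -- rewrite the LHS as a sum over starting elements
  have L1 : psiFrom rk (⊥ : P) =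
      ∑ v : P, ∑ k ∈ Finset.range (Fintype.card P), ∑ c ∈ chainsFrom k v,
        wtS (rk (⊤ : P)) (Finset.univ.image fun i : Fin k => rk (c i.castSucc)) := by
    unfold psiFrom
    rw [Finset.sum_comm]
    refine Finset.sum_congr rfl fun k _ => ?_
    simp only [hrk_bot, Nat.sub_zero]
    rw [← Finset.sum_fiberwise (g := fun c : Fin (k + 1) → P => c 0)]
    refine Finset.sum_congr rfl fun v _ => ?_
    refine Finset.sum_congr ?_ fun _ _ => rfl
    ext c
    simp only [chainsFrom, Finset.mem_filter, Finset.mem_univ, true_and]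
    constructor
    · rintro ⟨⟨a1, a2, _⟩, a4⟩
      exact ⟨a1, a2, a4⟩
    · rintro ⟨a1, a2, a3⟩
      exact ⟨⟨a1, a2, bot_le⟩, a3⟩
  rw [L1, sum_univ_split hbt]
  -- the three pieces
  have Htop : ∑ k ∈ Finset.range (Fintype.card P), ∑ c ∈ chainsFrom k (⊤ : P),
      wtS (rk (⊤ : P)) (Finset.univ.image fun i : Fin k => rk (c i.castSucc)) =
      (Aa - Bb) ^ (rk (⊤ : P)) := by
    have := chain_sum_top (P := P) rk 0
    simp only [Nat.sub_zero] at this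
    exact this
  have Hbot := bot_chain_sum rk hrk_cov hrk_bot hbt
  have Hsplit : ∀ v ∈ Finset.univ.filter fun v : P => ⊥ < v ∧ v < ⊤,
      ∑ k ∈ Finset.range (Fintype.card P), ∑ c ∈ chainsFrom k v,
        wtS (rk (⊤ : P)) (Finset.univ.image fun i : Fin k => rk (c i.castSucc)) =
      (Aa - Bb) ^ (rk v) * (Bb * tailSum rk v) := by
    intro v hv
    simp only [Finset.mem_filter, Finset.mem_univ, true_and] at hv
    have := chain_sum_split rk hrk_cov hv.2 0 (Nat.zero_le _)
    simp only [Nat.sub_zero] at this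
    exact this
  rw [Hbot, Htop, Finset.sum_congr rfl Hsplit]
  -- rewrite the RHS
  have R1 : ∀ w ∈ Finset.univ.filter fun w : P => ⊥ < w ∧ w < ⊤,
      Aa * (Aa - Bb) ^ (rk w - 1) * Bb * psiTildeFrom rk w =
        (Aa - Bb) ^ (rk w) * (Bb * tailSum rk w) +
          Bb * ((Aa - Bb) ^ (rk w - 1) * (Bb * tailSum rk w)) := by
    intro w hw
    simp only [Finset.mem_filter, Finset.mem_univ, true_and] at hw
    have h1 : 1 ≤ rk w := by
      have := rk_lt_of_lt hrk_cov hw.1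
      omega
    rw [psiTilde_eq_tailSum rk hrk_cov hw.2]
    have hAa : Aa = (Aa - Bb) + Bb := by noncomm_ring
    calc Aa * (Aa - Bb) ^ (rk w - 1) * Bb * tailSum rk w
        = ((Aa - Bb) + Bb) * (Aa - Bb) ^ (rk w - 1) * Bb * tailSum rk w := by rw [← hAa]
      _ = (Aa - Bb) * (Aa - Bb) ^ (rk w - 1) * (Bb * tailSum rk w) +
            Bb * ((Aa - Bb) ^ (rk w - 1) * (Bb * tailSum rk w)) := by noncomm_ring
      _ = (Aa - Bb) ^ (rk w) * (Bb * tailSum rk w) +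
            Bb * ((Aa - Bb) ^ (rk w - 1) * (Bb * tailSum rk w)) := by
          rw [← pow_succ', show rk w - 1 + 1 = rk w from by omega]
  rw [Finset.sum_congr rfl R1]
  have R2 : Aa * (Aa - Bb) ^ (rk (⊤ : P) - 1) = (Aa - Bb) ^ (rk (⊤ : P)) + Bb * (Aa - Bb) ^ (rk (⊤ : P) - 1) := by
    have : Aa * (Aa - Bb) ^ (rk (⊤ : P) - 1) =
        (Aa - Bb) * (Aa - Bb) ^ (rk (⊤ : P) - 1) + Bb * (Aa - Bb) ^ (rk (⊤ : P) - 1) := by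
      rw [← add_mul, sub_add_cancel]
    rw [this, ← pow_succ', show rk (⊤ : P) - 1 + 1 = rk (⊤ : P) from by omega]
  rw [R2, Finset.sum_add_distrib, mul_add, Finset.mul_sum]
  abel
end

section
/- For every k ≥ 0, ω(a·(a-b)^k) = (a - (-y)^{k+1}·b)·(a-b)^k in ℤ[y]⟨a,b⟩. -/
open Polynomial

noncomputable section
lemma omega_eq (f : NCPoly) : omega f = Finsupp.linearCombination NCR (fun w => omegaWord (FreeMonoid.toList w)) f.coeff := (Finsupp.linearCombination_apply _ _).symm
lemma omega_zero : omega 0 = 0 := by simp [omega_eq, MonoidAlgebra.coeff_zero]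
lemma omega_add (f g : NCPoly) : omega (f + g) = omega f + omega g := by simp [omega_eq, MonoidAlgebra.coeff_add]
lemma omega_sub (f g : NCPoly) : omega (f - g) = omega f - omega g := by simp [omega_eq, MonoidAlgebra.coeff_sub]
lemma omega_single (w : FreeMonoid Bool) (c : NCR) :
    omega (MonoidAlgebra.single w c) = c • omegaWord (FreeMonoid.toList w) := by
  simp [omega_eq, MonoidAlgebra.coeff_single]
lemma omega_one : omega 1 = 1 := by
  have h : omega 1 = (1:NCR) • omegaWord (FreeMonoid.toList 1) := omega_single 1 1
  simpa [omegaWord] using h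
lemma AaMul (w : FreeMonoid Bool) (c : NCR) : Aa * MonoidAlgebra.single w c = MonoidAlgebra.single (FreeMonoid.of false * w) c := by
  simp [Aa, MonoidAlgebra.of_apply, MonoidAlgebra.single_mul_single]
lemma BbMul (w : FreeMonoid Bool) (c : NCR) : Bb * MonoidAlgebra.single w c = MonoidAlgebra.single (FreeMonoid.of true * w) c := by
  simp [Bb, MonoidAlgebra.of_apply, MonoidAlgebra.single_mul_single]

lemma omegaB (g : NCPoly) : omega (Bb * g) = (Bb + (X:NCR) • Aa) * omega g := by
  induction g using MonoidAlgebra.induction_linear with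
  | zero => simp [omega_zero]
  | add f g hf hg => rw [mul_add, omega_add, omega_add, hf, hg, mul_add]
  | single w c =>
      rw [BbMul, omega_single, omega_single]
      have : omegaWord (FreeMonoid.toList (FreeMonoid.of true * w)) =
          (Bb + (X:NCR) • Aa) * omegaWord (FreeMonoid.toList w) := rfl
      rw [this, mul_smul_comm]

lemma omegaAA (g : NCPoly) : omega (Aa * (Aa * g)) = (Aa + (X:NCR) • Bb) * omega (Aa * g) := by
  induction g using MonoidAlgebra.induction_linear with
  | zero => simp [omega_zero]
  | add f g hf hg => simp only [mul_add, omega_add, hf, hg]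
  | single w c =>
      rw [AaMul, AaMul, omega_single, omega_single]
      have : omegaWord (FreeMonoid.toList (FreeMonoid.of false * (FreeMonoid.of false * w))) =
          (Aa + (X:NCR) • Bb) * omegaWord (FreeMonoid.toList (FreeMonoid.of false * w)) := rfl
      rw [this, mul_smul_comm]

lemma omegaAB (g : NCPoly) : omega (Aa * (Bb * g)) =
    (((1 + X : NCR)) • (Aa * Bb) + ((X + X ^ 2 : NCR)) • (Bb * Aa)) * omega g := by
  induction g using MonoidAlgebra.induction_linear with
  | zero => simp [omega_zero]
  | add f g hf hg => simp only [mul_add, omega_add, hf, hg]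
  | single w c =>
      rw [BbMul, AaMul, omega_single, omega_single]
      have : omegaWord (FreeMonoid.toList (FreeMonoid.of false * (FreeMonoid.of true * w))) =
          (((1 + X : NCR)) • (Aa * Bb) + ((X + X ^ 2 : NCR)) • (Bb * Aa)) * omegaWord (FreeMonoid.toList w) := rfl
      rw [this, mul_smul_comm]

def eS (k : ℕ) : NCR := ∑ i ∈ Finset.range (k+1), (-X)^i

theorem key (k : ℕ) : omega (Aa * (Aa - Bb)^k) = (Aa - ((-X:NCR)^(k+1)) • Bb) * (Aa-Bb)^k ∧
    omega ((Aa-Bb)^k) = (eS k) • (Aa-Bb)^k := by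
  induction k with
  | zero =>
      constructor
      · have h : omega Aa = (1:NCR) • omegaWord [false] := by
          rw [show Aa = MonoidAlgebra.single (FreeMonoid.of false) 1 from by
            simp [Aa, MonoidAlgebra.of_apply], omega_single]; rfl
        simp only [pow_zero, mul_one]
        rw [h]
        show (1:NCR) • ((Aa + (X:NCR) • Bb) * 1) = _
        rw [one_smul, mul_one, pow_one, neg_smul, sub_neg_eq_add]
      · simp [eS, omega_one]
  | succ k ih =>
      obtain ⟨hP, hQ⟩ := ih
      have he : eS (k+1) = 1 - X * eS k := by
        rw [eS, eS, geom_sum_succ]; ring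
      have hp' : eS (k+1) = eS k + (-X)^(k+1) := Finset.sum_range_succ _ _
      have hp : ((-X : NCR))^(k+1) = 1 - X * eS k - eS k := by
        linear_combination he - hp'
      have hp2 : ((-X : NCR))^(k+1+1) = -X * (1 - X * eS k - eS k) := by
        rw [pow_succ, hp]; ring
      have hQ' : omega ((Aa-Bb)^(k+1)) = (eS (k+1)) • (Aa-Bb)^(k+1) := by
        rw [pow_succ' (Aa - Bb) k, sub_mul, omega_sub, hP, omegaB, hQ]
        simp only [sub_mul, add_mul, smul_mul_assoc, mul_smul_comm, smul_smul, mul_sub, smul_sub]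
        set p : NCR := ((-X:NCR))^(k+1) with hpdef
        match_scalars
        all_goals (try simp only [he, hp])
        all_goals ring
      refine ⟨?_, hQ'⟩
      have hsplit : Aa * (Aa - Bb)^(k+1) = Aa * (Aa * (Aa-Bb)^k) - Aa * (Bb * (Aa-Bb)^k) := by
        rw [pow_succ' (Aa - Bb) k, sub_mul, mul_sub]
      rw [hsplit, omega_sub, omegaAA, omegaAB, hP, hQ, pow_succ' (Aa - Bb) k,
        show ((-X:NCR))^(k+1+1) = (-X)^(k+1) * (-X) from pow_succ _ _]
      simp only [sub_mul, add_mul, mul_sub, mul_add, smul_mul_assoc, mul_smul_comm, smul_smul,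
        smul_sub, smul_add, mul_assoc]
      set p : NCR := ((-X:NCR))^(k+1) with hpdef
      match_scalars
      all_goals (try simp only [he, hp])
      all_goals ring

end

/-- `ω(a·(a-b)^k) = (a - (-y)^{k+1}·b)·(a-b)^k` in `ℤ[y]⟨a,b⟩`. -/
theorem omega_a_mul_pow_sub (k : ℕ) :
    omega (Aa * (Aa - Bb) ^ k) =
      (Aa - ((-X : Polynomial ℤ) ^ (k + 1)) • Bb) * (Aa - Bb) ^ k :=
  (key k).1
end

section
/- On ℤ[y]⟨a,b⟩, the transformations ι and ω satisfy ι∘ω = (1+y)·(ω∘ι); that is, for every f ∈ ℤ[y]⟨a,b⟩ one has ι(ω(f)) = (1+y)·ω(ι(f)). -/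
open Polynomial

noncomputable section IotaOmegaAux

/-- `iota` on a single word. -/
def iotaWord (w : FreeMonoid Bool) : NCPoly :=
  match FreeMonoid.toList w with
  | [] => 0
  | _ :: rest => MonoidAlgebra.of NCR (FreeMonoid Bool) (FreeMonoid.ofList rest)

lemma iotaWord_nil : iotaWord (FreeMonoid.ofList ([] : List Bool)) = 0 := rfl

lemma iotaWord_cons (x : Bool) (l : List Bool) :
    iotaWord (FreeMonoid.ofList (x :: l))
      = MonoidAlgebra.of NCR (FreeMonoid Bool) (FreeMonoid.ofList l) := rfl

/-- `iota` as a linear map. -/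
def iotaL : NCPoly →ₗ[NCR] NCPoly :=
  (Finsupp.lsum NCR fun w => LinearMap.toSpanSingleton NCR NCPoly (iotaWord w)) ∘ₗ
    (MonoidAlgebra.coeffLinearEquiv NCR).toLinearMap

/-- `omega` as a linear map. -/
def omegaL : NCPoly →ₗ[NCR] NCPoly :=
  (Finsupp.lsum NCR fun w =>
    LinearMap.toSpanSingleton NCR NCPoly (omegaWord (FreeMonoid.toList w))) ∘ₗ
    (MonoidAlgebra.coeffLinearEquiv NCR).toLinearMap

lemma iotaL_apply (f : NCPoly) :
    iotaL f = (f.coeff : FreeMonoid Bool →₀ NCR).sum fun w c => c • iotaWord w := rfl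

lemma omegaL_apply (f : NCPoly) :
    omegaL f
      = (f.coeff : FreeMonoid Bool →₀ NCR).sum fun w c => c • omegaWord (FreeMonoid.toList w) := rfl

lemma iota_eq_iotaL (f : NCPoly) : iota f = iotaL f := by
  rw [iota, iotaL_apply]
  refine Finsupp.sum_congr fun w _ => ?_
  have hw : w = FreeMonoid.ofList (FreeMonoid.toList w) := (FreeMonoid.ofList_toList w).symm
  rcases h : FreeMonoid.toList w with _ | ⟨x, rest⟩
  · rw [h] at hw; rw [hw, iotaWord_nil, smul_zero]
  · rw [h] at hw; rw [hw, iotaWord_cons]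

lemma omega_eq_omegaL (f : NCPoly) : omega f = omegaL f := rfl

lemma iotaL_single (w : FreeMonoid Bool) (c : NCR) :
    iotaL (MonoidAlgebra.single w c) = c • iotaWord w := by
  rw [iotaL_apply, MonoidAlgebra.coeff_single]
  exact Finsupp.sum_single_index (by rw [zero_smul])

lemma omegaL_single (w : FreeMonoid Bool) (c : NCR) :
    omegaL (MonoidAlgebra.single w c) = c • omegaWord (FreeMonoid.toList w) := by
  rw [omegaL_apply, MonoidAlgebra.coeff_single]
  exact Finsupp.sum_single_index (by rw [zero_smul])

lemma iotaL_of_mul (x : Bool) (g : NCPoly) :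
    iotaL (MonoidAlgebra.of NCR (FreeMonoid Bool) (FreeMonoid.of x) * g) = g := by
  induction g using MonoidAlgebra.induction_linear with
  | zero => simp
  | add f g hf hg => rw [mul_add, map_add, hf, hg]
  | single w c =>
    rw [MonoidAlgebra.of_apply, MonoidAlgebra.single_mul_single, one_mul, iotaL_single]
    have hw : FreeMonoid.of x * w = FreeMonoid.ofList (x :: FreeMonoid.toList w) := rfl
    rw [hw, iotaWord_cons, FreeMonoid.ofList_toList, MonoidAlgebra.of_apply]
    exact MonoidAlgebra.smul_single' c w 1 |>.trans (by rw [mul_one])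

lemma iotaL_A_mul (g : NCPoly) : iotaL (Aa * g) = g := iotaL_of_mul false g
lemma iotaL_B_mul (g : NCPoly) : iotaL (Bb * g) = g := iotaL_of_mul true g

lemma key_s18 (x : Bool) (l : List Bool) :
    iotaL (omegaWord (x :: l)) = (1 + X : NCR) • omegaWord l := by
  cases x with
  | true =>
    have h : omegaWord (true :: l) = (Bb + (X : NCR) • Aa) * omegaWord l := rfl
    rw [h, add_mul, smul_mul_assoc, map_add, map_smul, iotaL_B_mul, iotaL_A_mul,
      add_smul, one_smul]
  | false =>
    have hfa : forall l' : List Bool, omegaWord (false :: l') = (Aa + (X : NCR) • Bb) * omegaWord l' ->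
        iotaL (omegaWord (false :: l')) = (1 + X : NCR) • omegaWord l' := by
      intro l' h
      rw [h, add_mul, smul_mul_assoc, map_add, map_smul, iotaL_A_mul, iotaL_B_mul,
        add_smul, one_smul]
    cases l with
    | nil => exact hfa [] rfl
    | cons y rest =>
      cases y with
      | false => exact hfa (false :: rest) rfl
      | true =>
        have h1 : omegaWord (false :: true :: rest)
            = (((1 + X : NCR)) • (Aa * Bb) + ((X + X ^ 2 : NCR)) • (Bb * Aa))
              * omegaWord rest := rfl
        have h2 : omegaWord (true :: rest) = (Bb + (X : NCR) • Aa) * omegaWord rest := rfl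
        rw [h1, h2, add_mul, smul_mul_assoc, smul_mul_assoc, map_add, map_smul, map_smul,
          mul_assoc, mul_assoc, iotaL_A_mul, iotaL_B_mul, add_mul, smul_mul_assoc, smul_add,
          smul_smul, show ((1 + X) * X : NCR) = X + X ^ 2 from by ring]

end IotaOmegaAux

/-- On `ℤ[y]⟨a,b⟩` one has `ι ∘ ω = (1+y)·(ω ∘ ι)`. -/
theorem iota_omega_eq (f : NCPoly) :
    iota (omega f) = (1 + X : Polynomial ℤ) • omega (iota f) := by
  rw [iota_eq_iotaL, iota_eq_iotaL, omega_eq_omegaL, omega_eq_omegaL]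
  induction f using MonoidAlgebra.induction_linear with
  | zero => simp
  | add f g hf hg => rw [map_add, map_add, map_add, map_add, hf, hg, smul_add]
  | single w c =>
    rw [omegaL_single, map_smul, iotaL_single, map_smul]
    have hw : w = FreeMonoid.ofList (FreeMonoid.toList w) := (FreeMonoid.ofList_toList w).symm
    rcases h : FreeMonoid.toList w with _ | ⟨x, rest⟩
    · rw [h] at hw
      rw [hw, iotaWord_nil, map_zero, smul_zero, smul_zero]
      have h2 : (omegaWord [] : NCPoly) = MonoidAlgebra.single 1 1 := rfl
      rw [h2, iotaL_single]
      have h3 : iotaWord (1 : FreeMonoid Bool) = 0 := rfl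
      rw [h3, smul_zero, smul_zero]
    · rw [h] at hw
      rw [key_s18, hw, iotaWord_cons]
      have h2 : (MonoidAlgebra.of NCR (FreeMonoid Bool) (FreeMonoid.ofList rest) : NCPoly)
          = MonoidAlgebra.single (FreeMonoid.ofList rest) 1 := rfl
      rw [h2, omegaL_single, FreeMonoid.toList_ofList, one_smul, smul_comm]
end
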